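/- Let a, λ ∈ ℝⁿ with ‖a‖ = ‖λ‖ = 1, λ ≠ ±a, d ∈ ℝᵐ with ‖d‖ < 1, and let φ_λ(y) = max{λᵀx : ‖x‖ ≤ ‖y‖, aᵀx + dᵀy ≤ 0}. Define r(β) = 0 if λᵀa + dᵀβ ≤ 0 and r(β) = (dᵀβ + λᵀa·φ_λ(β))/(φ_λ(β) + dᵀβ·λᵀa) otherwise, for β on the unit sphere of ℝᵐ. Then the set C = {(x,y) : −λᵀx + ∇φ_λ(β)ᵀy ≤ r(β) for all β with ‖β‖ = 1} has empty interior intersection with S = {(x,y) : ‖x‖ ≤ ‖y‖, aᵀx + dᵀy = −1}, i.e., for every (x₀,y₀) ∈ S with y₀ ≠ 0, −λᵀx₀ + φ_λ(y₀) ≥ r(y₀/‖y₀‖). -/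
import Mathlib

theorem aux_sutv (s t u v : ℝ) (hu2 : u^2 = 1 - t^2) (hv2 : v^2 = 1 - s^2)
    (hupos : 0 < u) (hvpos : 0 < v) (hst : 0 < t + s) : 0 ≤ s*u + t*v := by
  rcases le_or_gt 0 t with h|h
  · rcases le_or_gt 0 s with h'|h'
    · nlinarith [mul_nonneg h' hupos.le, mul_nonneg h hvpos.le]
    · have h1 : 0 < t := by linarith
      have h2 : 0 < t*v - s*u := by nlinarith [mul_pos h1 hvpos, mul_pos (neg_pos.mpr h') hupos]
      nlinarith [h2, hu2, hv2]
  · have h' : 0 < s := by linarith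
    have h2 : 0 < s*u - t*v := by nlinarith [mul_pos h' hupos, mul_pos (neg_pos.mpr h) hvpos]
    nlinarith [h2, hu2, hv2]

set_option maxHeartbeats 1000000 in
theorem aux_upper (s t u v p q : ℝ) (hu2 : u^2 = 1 - t^2) (hv2 : v^2 = 1 - s^2)
    (hupos : 0 < u) (hvpos : 0 < v) (hs1 : s < 1) (hs1' : -1 < s)
    (hst : 0 < t + s) (hx12 : p^2 + q^2 ≤ 1) (hps : p + s ≤ 0) :
    t*p + u*q ≤ u*v - s*t := by
  have hsutv := aux_sutv s t u v hu2 hv2 hupos hvpos hst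
  have hp1 : -1 ≤ p := by nlinarith [sq_nonneg q]
  have hKnn : 0 ≤ u*v - t*(s+p) := by
    rcases le_or_gt 0 t with h|h
    · nlinarith [mul_pos hupos hvpos, mul_nonneg h (neg_nonneg.mpr hps)]
    · have h1 : t^2 < s^2 := by nlinarith
      have hs0 : 0 < s := by linarith
      have hA : 0 ≤ (1-s)*(1+s-2*t^2) :=
        mul_nonneg (by linarith) (by nlinarith [h1, mul_pos (show (0:ℝ)<1-s by linarith) (show (0:ℝ)<1+2*s by linarith)])
      have hid2 : (u*v)^2 - (t*(1-s))^2 = (1-s)*(1+s-2*t^2) := by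
        linear_combination v^2*hu2 + (1-t^2)*hv2
      have h2 : 0 ≤ (u*v)^2 - (t*(1-s))^2 := by rw [hid2]; exact hA
      have h3 : 0 ≤ u*v + t*(1-s) := by nlinarith [h2, mul_pos hupos hvpos]
      nlinarith [h3, h]
  have he1' : s*(2*t^2-1) = -2*s*u^2 + s := by linear_combination (2*s) * hu2
  have hB : p + s*(2*t^2-1) - 2*u*v*t ≤ 0 := by
    rw [he1']
    nlinarith [hps, mul_nonneg hupos.le hsutv]
  have hid : (u*v - t*(s+p))^2 - u^2*(1-p^2) = (s+p)*(p + s*(2*t^2-1) - 2*u*v*t) := by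
    linear_combination (v^2 - 1 + p^2) * hu2 + (1 - t^2) * hv2
  have hK2 : u^2*q^2 ≤ (u*v - t*(s+p))^2 := by
    have hprod : 0 ≤ (s+p)*(p + s*(2*t^2-1) - 2*u*v*t) := by
      nlinarith [mul_nonneg (neg_nonneg.mpr hps) (neg_nonneg.mpr hB)]
    nlinarith [hid, hprod,
      mul_nonneg (sq_nonneg u) (show (0:ℝ) ≤ 1 - p^2 - q^2 by linarith)]
  nlinarith [hK2, hKnn]

theorem aux_final (s t u v R q0 : ℝ) (hu2 : u^2 = 1 - t^2) (hv2 : v^2 = 1 - s^2)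
    (hupos : 0 < u) (hvpos : 0 < v) (hs1' : -1 < s)
    (hb0' : q0^2 ≤ R^2 - (1+R*s)^2) (hR1s : 1 ≤ R*(1-s)) :
    s*u + t*v ≤ (-(t*(-1 - R*s) + u*q0) + (R*(u*v) - R*(s*t)))*v := by
  have h3 : 1 ≤ R*v^2 - s := by
    have h4 : R*v^2 = R - R*s^2 := by linear_combination R*hv2
    have h5 : 0 ≤ (R*(1-s)-1)*(1+s) :=
      mul_nonneg (by linarith) (by linarith)
    nlinarith [h4, h5]
  have hident : (R*v^2 - s)^2 - v^2*(R^2 - (1+R*s)^2) = 1 := by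
    linear_combination (R^2*v^2 + 1) * hv2
  have hw : q0*v ≤ R*v^2 - s := by
    nlinarith [hident, h3, mul_le_mul_of_nonneg_left hb0' (sq_nonneg v), hvpos]
  nlinarith [mul_nonneg hupos.le (show (0:ℝ) ≤ R*v^2 - s - q0*v by linarith)]

theorem norm_le_of_sq_eq {E : Type*} [NormedAddCommGroup E] (x : E) (c : ℝ)
    (h : ‖x‖^2 = c^2) (hc : 0 ≤ c) : ‖x‖ ≤ c := by nlinarith [norm_nonneg x]

open RealInnerProductSpace

theorem bessel2 {n : ℕ} (a e x : EuclideanSpace ℝ (Fin n)) (ha : ‖a‖ = 1) (he : ‖e‖ = 1)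
    (hae : ⟪a, e⟫ = 0) : ⟪a, x⟫^2 + ⟪e, x⟫^2 ≤ ‖x‖^2 := by
  have h := real_inner_self_nonneg (x := x - ⟪a,x⟫ • a - ⟪e,x⟫ • e)
  simp only [inner_sub_left, inner_sub_right, real_inner_smul_left, real_inner_smul_right] at h
  have h1 : ⟪a,a⟫ = (1:ℝ) := by rw [real_inner_self_eq_norm_sq, ha]; norm_num
  have h2 : ⟪e,e⟫ = (1:ℝ) := by rw [real_inner_self_eq_norm_sq, he]; norm_num
  have h3 : ⟪e,a⟫ = (0:ℝ) := by rw [real_inner_comm]; exact hae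
  have h4 : ⟪x,a⟫ = ⟪a,x⟫ := real_inner_comm _ _
  have h5 : ⟪x,e⟫ = ⟪e,x⟫ := real_inner_comm _ _
  rw [h1,h2,h3,hae,h4,h5, real_inner_self_eq_norm_sq] at h
  nlinarith [h]

theorem normcomb {n : ℕ} (a e : EuclideanSpace ℝ (Fin n)) (ha : ‖a‖ = 1) (he : ‖e‖ = 1)
    (hae : ⟪a, e⟫ = 0) (p q : ℝ) : ‖p • a + q • e‖^2 = p^2 + q^2 := by
  rw [@norm_add_sq_real, real_inner_smul_left, real_inner_smul_right, norm_smul, norm_smul, hae, ha, he]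
  simp [mul_pow, sq_abs]

set_option maxHeartbeats 1000000 in
theorem maxnonhomob_free {n m : ℕ}
    (a lam : EuclideanSpace ℝ (Fin n)) (d : EuclideanSpace ℝ (Fin m))
    (ha : ‖a‖ = 1) (hlam : ‖lam‖ = 1)
    (hne : lam ≠ a) (hne' : lam ≠ -a) (hd : ‖d‖ < 1)
    (φ : EuclideanSpace ℝ (Fin m) → ℝ)
    (hφ : ∀ y : EuclideanSpace ℝ (Fin m),
      IsGreatest {r : ℝ | ∃ x : EuclideanSpace ℝ (Fin n),
        ‖x‖ ≤ ‖y‖ ∧ ⟪a, x⟫ + ⟪d, y⟫ ≤ 0 ∧ r = ⟪lam, x⟫} (φ y))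
    (r : EuclideanSpace ℝ (Fin m) → ℝ)
    (hr : ∀ β : EuclideanSpace ℝ (Fin m), r β =
      if ⟪lam, a⟫ + ⟪d, β⟫ ≤ 0 then 0
      else (⟪d, β⟫ + ⟪lam, a⟫ * φ β) / (φ β + ⟪d, β⟫ * ⟪lam, a⟫)) :
    ∀ (x₀ : EuclideanSpace ℝ (Fin n)) (y₀ : EuclideanSpace ℝ (Fin m)),
      y₀ ≠ 0 → ‖x₀‖ ≤ ‖y₀‖ → ⟪a, x₀⟫ + ⟪d, y₀⟫ = -1 →
      r (‖y₀‖⁻¹ • y₀) ≤ -⟪lam, x₀⟫ + φ y₀ := by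
  intro x₀ y₀ hy0 hxy hsum
  have hRpos : (0:ℝ) < ‖y₀‖ := norm_pos_iff.mpr hy0
  set R := ‖y₀‖ with hRdef
  set β : EuclideanSpace ℝ (Fin m) := R⁻¹ • y₀ with hβdef
  have hβ1 : ‖β‖ = 1 := by
    rw [hβdef, norm_smul, norm_inv, norm_norm, ← hRdef, inv_mul_cancel₀ hRpos.ne']
  have hy0β : R • β = y₀ := by
    rw [hβdef, smul_smul, mul_inv_cancel₀ hRpos.ne', one_smul]
  set t := ⟪lam, a⟫ with htdef
  set s := ⟪d, β⟫ with hsdef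
  have hdy : ⟪d, y₀⟫ = R * s := by rw [← hy0β, real_inner_smul_right, hsdef]
  clear_value R β t s
  have htle : |t| ≤ 1 := by
    rw [htdef]
    have := abs_real_inner_le_norm lam a
    rwa [hlam, ha, one_mul] at this
  have ht1 : t ≠ 1 := by
    intro h; rw [htdef] at h
    exact hne ((inner_eq_one_iff_of_norm_eq_one hlam ha).mp h)
  have ht1' : t ≠ -1 := by
    intro h
    apply hne'
    have hna : ‖(-a : EuclideanSpace ℝ (Fin n))‖ = 1 := by rw [norm_neg]; exact ha
    have h2 : ⟪lam, (-a : EuclideanSpace ℝ (Fin n))⟫ = 1 := by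
      rw [inner_neg_right, ← htdef, h]; norm_num
    exact (inner_eq_one_iff_of_norm_eq_one hlam hna).mp h2
  have htlt : t < 1 := lt_of_le_of_ne (abs_le.mp htle).2 ht1
  have htgt : -1 < t := lt_of_le_of_ne' (abs_le.mp htle).1 ht1'
  have hslt : |s| < 1 := by
    rw [hsdef]
    calc |⟪d, β⟫| ≤ ‖d‖ * ‖β‖ := abs_real_inner_le_norm d β
    _ = ‖d‖ := by rw [hβ1, mul_one]
    _ < 1 := hd
  have hs1 : s < 1 := (abs_lt.mp hslt).2
  have hs1' : -1 < s := (abs_lt.mp hslt).1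
  set u := Real.sqrt (1 - t^2) with hudef
  set v := Real.sqrt (1 - s^2) with hvdef
  have hu2 : u^2 = 1 - t^2 := Real.sq_sqrt (by nlinarith)
  have hupos : 0 < u := Real.sqrt_pos.mpr (by nlinarith)
  have hv2 : v^2 = 1 - s^2 := Real.sq_sqrt (by nlinarith)
  have hvpos : 0 < v := Real.sqrt_pos.mpr (by nlinarith)
  clear_value u v
  have hnormlam : ‖lam - t • a‖ = u := by
    have h1 : ‖lam - t • a‖^2 = 1 - t^2 := by
      rw [@norm_sub_sq_real, real_inner_smul_right, norm_smul, hlam, ha, ← htdef]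
      simp [sq_abs]; ring
    calc ‖lam - t • a‖ = Real.sqrt (‖lam - t • a‖^2) := (Real.sqrt_sq (norm_nonneg _)).symm
    _ = Real.sqrt (u^2) := by rw [h1, ← hu2]
    _ = u := Real.sqrt_sq hupos.le
  set e := u⁻¹ • (lam - t • a) with hedef
  have he1 : ‖e‖ = 1 := by
    rw [hedef, norm_smul, hnormlam, norm_inv, Real.norm_eq_abs,
      abs_of_pos hupos, inv_mul_cancel₀ hupos.ne']
  have hue : u • e = lam - t • a := by
    rw [hedef, smul_smul, mul_inv_cancel₀ hupos.ne', one_smul]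
  have haa : ⟪a,a⟫ = (1:ℝ) := by rw [real_inner_self_eq_norm_sq, ha]; norm_num
  have hee : ⟪e,e⟫ = (1:ℝ) := by rw [real_inner_self_eq_norm_sq, he1]; norm_num
  have hae : ⟪a, e⟫ = 0 := by
    have h0 : ⟪a, lam - t • a⟫ = 0 := by
      rw [inner_sub_right, real_inner_smul_right, haa, htdef, real_inner_comm]; ring
    rw [hedef, real_inner_smul_right, h0, mul_zero]
  have hea : ⟪e, a⟫ = 0 := by rw [real_inner_comm]; exact hae
  clear_value e
  have hdecomp : ∀ x : EuclideanSpace ℝ (Fin n), ⟪lam, x⟫ = t * ⟪a,x⟫ + u * ⟪e,x⟫ := by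
    intro x
    have hl : lam = t • a + u • e := by rw [hue]; abel
    calc ⟪lam, x⟫ = ⟪t • a + u • e, x⟫ := by rw [← hl]
    _ = t * ⟪a,x⟫ + u * ⟪e,x⟫ := by
        rw [inner_add_left, real_inner_smul_left, real_inner_smul_left]
  have hax : ∀ p q : ℝ, ⟪a, p • a + q • e⟫ = p := by
    intro p q
    rw [inner_add_right, real_inner_smul_right, real_inner_smul_right, hae, haa]; ring
  have hex : ∀ p q : ℝ, ⟪e, p • a + q • e⟫ = q := by
    intro p q
    rw [inner_add_right, real_inner_smul_right, real_inner_smul_right, hea, hee]; ring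
  by_cases hcase : t + s ≤ 0
  · rw [hr, if_pos (by rw [← hsdef]; exact hcase)]
    have hmem : ⟪lam, x₀⟫ ≤ φ y₀ :=
      (hφ y₀).2 ⟨x₀, by rw [← hRdef]; exact hxy, by rw [hsum]; norm_num, rfl⟩
    linarith
  · push_neg at hcase
    have hcase' : 0 < t + s := hcase
    have hφβ_ge : u*v - s*t ≤ φ β := by
      refine (hφ β).2 ⟨(-s) • a + v • e, ?_, ?_, ?_⟩
      · rw [hβ1]
        exact norm_le_of_sq_eq _ 1
          (by rw [normcomb a e ha he1 hae]; linear_combination hv2) one_pos.le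
      · rw [hax, ← hsdef]; linarith
      · rw [hdecomp, hax, hex]; ring
    have hφβ_le : φ β ≤ u*v - s*t := by
      obtain ⟨x, hx1, hx2, hx3⟩ := (hφ β).1
      rw [hβ1] at hx1
      rw [← hsdef] at hx2
      set p := ⟪a,x⟫ with hpdef
      set q := ⟪e,x⟫ with hqdef
      have hb := bessel2 a e x ha he1 hae
      rw [← hpdef, ← hqdef] at hb
      clear_value p q
      have hx1' : ‖x‖^2 ≤ 1^2 := pow_le_pow_left₀ (norm_nonneg x) hx1 2
      have hx12 : p^2 + q^2 ≤ 1 := by linarith [hb, hx1']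
      rw [hx3, hdecomp, ← hpdef, ← hqdef]
      exact aux_upper s t u v p q hu2 hv2 hupos hvpos hs1 hs1' (by linarith) hx12 hx2
    have hφβ : φ β = u*v - s*t := le_antisymm hφβ_le hφβ_ge
    rw [hr, if_neg (by rw [← hsdef]; push_neg; linarith), ← hsdef, hφβ]
    have hLHS : (s + t*(u*v - s*t))/(u*v - s*t + s*t) = (s*u + t*v)/v := by
      rw [show u*v - s*t + s*t = u*v from by ring,
        show s + t*(u*v - s*t) = u*(s*u + t*v) from by linear_combination (-s) * hu2,
        mul_div_mul_left _ _ hupos.ne']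
    rw [hLHS, div_le_iff₀ hvpos]
    have hφy : R*(u*v) - R*(s*t) ≤ φ y₀ := by
      refine (hφ y₀).2 ⟨(-(s*R)) • a + (v*R) • e, ?_, ?_, ?_⟩
      · rw [← hRdef]
        exact norm_le_of_sq_eq _ R
          (by rw [normcomb a e ha he1 hae]; linear_combination R^2*hv2) hRpos.le
      · rw [hax, hdy]; linarith
      · rw [hdecomp, hax, hex]; ring
    have hlx0 := hdecomp x₀
    set p0 := ⟪a,x₀⟫ with hp0def
    set q0 := ⟪e,x₀⟫ with hq0def
    have hbes0 := bessel2 a e x₀ ha he1 hae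
    rw [← hp0def, ← hq0def] at hbes0
    clear_value p0 q0
    have hp0 : p0 = -1 - R*s := by rw [hdy] at hsum; linarith
    have hx0' : ‖x₀‖^2 ≤ R^2 := pow_le_pow_left₀ (norm_nonneg x₀) hxy 2
    have hb0' : q0^2 ≤ R^2 - (1+R*s)^2 := by
      have hh : p0^2 = (1+R*s)^2 := by rw [hp0]; ring
      linarith [hbes0, hx0', hh]
    have hp0R : -R ≤ p0 := by
      have h1 : |p0| ≤ R := by
        have h2 := abs_real_inner_le_norm a x₀
        rw [ha, one_mul, ← hp0def] at h2
        exact le_trans h2 hxy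
      linarith [(abs_le.mp h1).1]
    have hR1s : 1 ≤ R*(1-s) := by
      have h1 : -R ≤ -1 - R*s := hp0 ▸ hp0R
      have h2 : R*(1-s) = R - R*s := by ring
      linarith [h1, h2]
    rw [hlx0, hp0]
    calc s*u + t*v ≤ (-(t*(-1 - R*s) + u*q0) + (R*(u*v) - R*(s*t)))*v :=
        aux_final s t u v R q0 hu2 hv2 hupos hvpos hs1' hb0' hR1s
    _ ≤ (-(t*(-1 - R*s) + u*q0) + φ y₀)*v := by
        apply mul_le_mul_of_nonneg_right (by linarith [hφy]) hvpos.le
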